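/- Fix a nest N and a projection N₀ ∈ N. If (S_i)_{i∈ℕ} is a countable chain (under inclusion) of countable sets of operators, each of Type-S with respect to (N, N₀), then the union ⋃_{i∈ℕ} S_i is also of Type-S. -/

import Mathlib

noncomputable section

universe u

variable {H : Type u} [NormedAddCommGroup H] [InnerProductSpace ℂ H] [CompleteSpace H]
  [TopologicalSpace.SeparableSpace H]

/-- A nest: a linearly ordered set of orthogonal projections containing `0` and `1`. -/
structure Nest (H : Type u) [NormedAddCommGroup H] [InnerProductSpace ℂ H]
    [CompleteSpace H] where
  carrier : Set (H →L[ℂ] H)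
  isProj : ∀ P ∈ carrier, IsSelfAdjoint P ∧ P * P = P
  zero_mem : (0 : H →L[ℂ] H) ∈ carrier
  one_mem : (1 : H →L[ℂ] H) ∈ carrier
  chain : ∀ P ∈ carrier, ∀ Q ∈ carrier, Q * P = P ∨ P * Q = Q

/-- Order on projections: `P ≤ Q` iff `ran P ⊆ ran Q`. -/
def projLE (P Q : H →L[ℂ] H) : Prop := Q * P = P

/-- Strict order on projections. -/
def projLT (P Q : H →L[ℂ] H) : Prop := projLE P Q ∧ P ≠ Q

/-- The nest algebra: all bounded operators leaving invariant the range of every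
projection in the nest, i.e. `(1 - P) X P = 0` for every `P` in the nest. -/
def nestAlgebra (𝒩 : Nest H) : Subalgebra ℂ (H →L[ℂ] H) where
  carrier := {X | ∀ P ∈ 𝒩.carrier, (1 - P) * X * P = 0}
  mul_mem' := by
    intro X Y hX hY P hP
    have hX' := hX P hP
    have hY' := hY P hP
    have hYP : Y * P = P * (Y * P) := by
      have h : (1 - P) * Y * P + P * Y * P = Y * P := by noncomm_ring
      rw [hY', zero_add] at h
      rw [← mul_assoc]; exact h.symm
    calc (1 - P) * (X * Y) * P = (1 - P) * X * (Y * P) := by noncomm_ring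
      _ = (1 - P) * X * (P * (Y * P)) := by rw [← hYP]
      _ = ((1 - P) * X * P) * (Y * P) := by noncomm_ring
      _ = 0 := by rw [hX', zero_mul]
  one_mem' := by
    intro P hP
    have h := (𝒩.isProj P hP).2
    calc (1 - P) * 1 * P = P - P * P := by noncomm_ring
      _ = 0 := by rw [h, sub_self]
  add_mem' := by
    intro X Y hX hY P hP
    have hX' := hX P hP
    have hY' := hY P hP
    calc (1 - P) * (X + Y) * P = (1 - P) * X * P + (1 - P) * Y * P := by noncomm_ring
      _ = 0 := by rw [hX', hY', add_zero]
  zero_mem' := by intro P hP; simp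
  algebraMap_mem' := by
    intro c P hP
    have h := (𝒩.isProj P hP).2
    have h1 : (1 - P) * 1 * P = 0 := by
      calc (1 - P) * 1 * P = P - P * P := by noncomm_ring
        _ = 0 := by rw [h, sub_self]
    calc (1 - P) * (algebraMap ℂ (H →L[ℂ] H) c) * P
        = (1 - P) * (c • (1 : H →L[ℂ] H)) * P := by rw [Algebra.algebraMap_eq_smul_one]
      _ = c • ((1 - P) * 1 * P) := by rw [mul_smul_comm, smul_mul_assoc]
      _ = 0 := by rw [h1, smul_zero]

/-- A set `S` of operators is of Type-S with respect to `(𝒩, N₀)`: there is a strictly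
increasing sequence `N_n` in `𝒩` converging strongly to `N₀` and unit vectors
`x_n = (N_{n+1} - N_n) x_n` such that `X x_n → 0` and `X* x_n → 0` for every `X ∈ S`. -/
def TypeS (𝒩 : Nest H) (N₀ : H →L[ℂ] H) (S : Set (H →L[ℂ] H)) : Prop :=
  ∃ (Nf : ℕ → H →L[ℂ] H) (x : ℕ → H),
    (∀ n, Nf n ∈ 𝒩.carrier) ∧ (∀ n, projLT (Nf n) (Nf (n + 1))) ∧
    (∀ n, projLT (Nf n) N₀) ∧
    (∀ h : H, Filter.Tendsto (fun n => Nf n h) Filter.atTop (nhds (N₀ h))) ∧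
    (∀ n, ‖x n‖ = 1) ∧ (∀ n, (Nf (n + 1) - Nf n) (x n) = x n) ∧
    ∀ X ∈ S, Filter.Tendsto (fun n => X (x n)) Filter.atTop (nhds 0) ∧
      Filter.Tendsto (fun n => (ContinuousLinearMap.adjoint X) (x n))
        Filter.atTop (nhds 0)


section Statement14Helpers

variable {H : Type u} [NormedAddCommGroup H] [InnerProductSpace ℂ H] [CompleteSpace H]

lemma projLE_trans' {P Q R : H →L[ℂ] H} (h1 : projLE P Q) (h2 : projLE Q R) : projLE P R := by
  unfold projLE at *
  calc R * P = R * (Q * P) := by rw [h1]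
    _ = (R * Q) * P := by rw [mul_assoc]
    _ = Q * P := by rw [h2]
    _ = P := h1

lemma projLE_comm' {P Q : H →L[ℂ] H} (hP : IsSelfAdjoint P) (hQ : IsSelfAdjoint Q)
    (h : projLE P Q) : P * Q = P := by
  have h2 := congrArg star h
  rwa [star_mul, hP.star_eq, hQ.star_eq] at h2

lemma projLE_antisymm' {P Q : H →L[ℂ] H} (hP : IsSelfAdjoint P) (hQ : IsSelfAdjoint Q)
    (h1 : projLE P Q) (h2 : projLE Q P) : P = Q :=
  (projLE_comm' hP hQ h1).symm.trans h2

lemma proj_norm_le' {P : H →L[ℂ] H} (hsa : IsSelfAdjoint P) (hid : P * P = P) (v : H) :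
    ‖P v‖ ≤ ‖v‖ := by
  rcases (norm_nonneg (P v)).eq_or_lt with h0 | h0
  · rw [← h0]; exact norm_nonneg v
  have hadj : ContinuousLinearMap.adjoint P = P := by
    rw [← ContinuousLinearMap.star_eq_adjoint, hsa.star_eq]
  have key : (inner ℂ (P v) (P v) : ℂ) = inner ℂ v (P v) := by
    calc (inner ℂ (P v) (P v) : ℂ)
        = inner ℂ v (ContinuousLinearMap.adjoint P (P v)) := by
          rw [ContinuousLinearMap.adjoint_inner_right]
      _ = inner ℂ v ((P * P) v) := by rw [hadj]; rfl
      _ = inner ℂ v (P v) := by rw [hid]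
  have h1 : ‖P v‖ * ‖P v‖ = RCLike.re (inner ℂ (P v) (P v) : ℂ) :=
    (inner_self_eq_norm_mul_norm _).symm
  have h2 : RCLike.re (inner ℂ v (P v) : ℂ) ≤ ‖(inner ℂ v (P v) : ℂ)‖ :=
    (le_abs_self _).trans (RCLike.abs_re_le_norm _)
  have h3 : ‖(inner ℂ v (P v) : ℂ)‖ ≤ ‖v‖ * ‖P v‖ := norm_inner_le_norm _ _
  have h4 : ‖P v‖ * ‖P v‖ ≤ ‖v‖ * ‖P v‖ := by rw [h1, key]; exact h2.trans h3
  exact le_of_mul_le_mul_right h4 h0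

end Statement14Helpers

/-- the union of a countable chain of countable Type-S sets is Type-S. -/
theorem statement14 (𝒩 : Nest H) (N₀ : H →L[ℂ] H) (hN₀ : N₀ ∈ 𝒩.carrier)
    (S : ℕ → Set (H →L[ℂ] H)) (hcount : ∀ i, (S i).Countable)
    (hchain : ∀ i j, S i ⊆ S j ∨ S j ⊆ S i) (hS : ∀ i, TypeS 𝒩 N₀ (S i)) :
    TypeS 𝒩 N₀ (⋃ i, S i) := by
  classical
  -- Pass to `T i = insert 0 (S i)` so the union is nonempty.
  set T : ℕ → Set (H →L[ℂ] H) := fun i => insert 0 (S i) with hTdef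
  have hTcount : ∀ i, (T i).Countable := fun i => (hcount i).insert 0
  have hTchain : ∀ i j, T i ⊆ T j ∨ T j ⊆ T i := by
    intro i j
    rcases hchain i j with h | h
    · exact Or.inl (Set.insert_subset_insert h)
    · exact Or.inr (Set.insert_subset_insert h)
  have hTS : ∀ i, TypeS 𝒩 N₀ (T i) := by
    intro i
    obtain ⟨Nf, x, h1, h2, h3, h4, h5, h6, h7⟩ := hS i
    refine ⟨Nf, x, h1, h2, h3, h4, h5, h6, ?_⟩
    intro X hX
    rcases hX with rfl | hX
    · constructor
      · simpa using (tendsto_const_nhds : Filter.Tendsto (fun _ : ℕ => (0:H)) Filter.atTop _)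
      · simpa using (tendsto_const_nhds : Filter.Tendsto (fun _ : ℕ => (0:H)) Filter.atTop _)
    · exact h7 X hX
  suffices hsuf : TypeS 𝒩 N₀ (⋃ i, T i) by
    obtain ⟨Nf, x, h1, h2, h3, h4, h5, h6, h7⟩ := hsuf
    exact ⟨Nf, x, h1, h2, h3, h4, h5, h6, fun X hX =>
      h7 X (Set.iUnion_mono (fun i => Set.subset_insert 0 (S i)) hX)⟩
  -- Enumerate the union.
  have hUc : (⋃ i, T i).Countable := Set.countable_iUnion hTcount
  have hUne : (⋃ i, T i).Nonempty := ⟨0, Set.mem_iUnion.mpr ⟨0, Set.mem_insert _ _⟩⟩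
  obtain ⟨f, hf⟩ := hUc.exists_eq_range hUne
  -- A dense sequence in `H`.
  have hne : Nonempty H := ⟨0⟩
  set d : ℕ → H := TopologicalSpace.denseSeq H with hddef
  have hdense : DenseRange d := TopologicalSpace.denseRange_denseSeq H
  have projOf := 𝒩.isProj
  -- Each finite initial segment of the enumeration lies in a single `T m`.
  have hfm : ∀ n : ℕ, ∃ m, ∀ j ≤ n, f j ∈ T m := by
    intro n
    induction n with
    | zero =>
      have h0 : f 0 ∈ ⋃ i, T i := hf ▸ Set.mem_range_self 0
      obtain ⟨i, hi⟩ := Set.mem_iUnion.mp h0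
      exact ⟨i, fun j hj => by simpa [Nat.le_zero.mp hj] using hi⟩
    | succ n ih =>
      obtain ⟨m, hm⟩ := ih
      have h0 : f (n+1) ∈ ⋃ i, T i := hf ▸ Set.mem_range_self (n+1)
      obtain ⟨i, hi⟩ := Set.mem_iUnion.mp h0
      rcases hTchain m i with h | h
      · refine ⟨i, fun j hj => ?_⟩
        by_cases hj' : j ≤ n
        · exact h (hm j hj')
        · have : j = n + 1 := by omega
          rw [this]; exact hi
      · refine ⟨m, fun j hj => ?_⟩
        by_cases hj' : j ≤ n
        · exact hm j hj'
        · have : j = n + 1 := by omega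
          rw [this]; exact h hi
  -- The key step: given `P < N₀` in the nest, find a larger `Q < N₀` and a good vector.
  have step : ∀ (n : ℕ) (P : H →L[ℂ] H), P ∈ 𝒩.carrier → projLT P N₀ →
      ∃ Q : H →L[ℂ] H, ∃ xx : H, Q ∈ 𝒩.carrier ∧ projLT Q N₀ ∧ projLT P Q ∧ ‖xx‖ = 1 ∧
        (Q - P) xx = xx ∧
        (∀ j ≤ n, ‖f j xx‖ < 1/(n+1) ∧
          ‖(ContinuousLinearMap.adjoint (f j)) xx‖ < 1/(n+1)) ∧
        (∀ j ≤ n, ‖Q (d j) - N₀ (d j)‖ < 1/(n+1)) := by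
    intro n P hPmem hPlt
    obtain ⟨m, hm⟩ := hfm n
    obtain ⟨M, y, hMmem, hMlt, hMltN, hMconv, hynorm, hyeq, hyX⟩ := hTS m
    have hε : (0:ℝ) < 1/(n+1) := by positivity
    have hMmono : ∀ k l, k ≤ l → projLE (M k) (M l) := by
      intro k l hkl
      induction l, hkl using Nat.le_induction with
      | base => exact (projOf (M k) (hMmem k)).2
      | succ l _ ih => exact projLE_trans' ih (hMlt l).1
    have hk₀ : ∃ k₀, projLE P (M k₀) := by
      by_contra hcon
      push_neg at hcon
      have hall : ∀ k, projLE (M k) P := by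
        intro k
        rcases 𝒩.chain P hPmem (M k) (hMmem k) with h | h
        · exact absurd h (hcon k)
        · exact h
      have hNP : projLE N₀ P := by
        refine ContinuousLinearMap.ext fun v => ?_
        have t1 : Filter.Tendsto (fun k => P (M k v)) Filter.atTop (nhds (P (N₀ v))) :=
          (P.continuous.tendsto _).comp (hMconv v)
        have t2 : ∀ k, P (M k v) = M k v := fun k =>
          congrFun (congrArg DFunLike.coe (hall k)) v
        exact tendsto_nhds_unique (t1.congr fun k => t2 k) (hMconv v)
      exact hPlt.2 (projLE_antisymm' (projOf P hPmem).1 (projOf N₀ hN₀).1 hPlt.1 hNP)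
    obtain ⟨k₀, hk₀⟩ := hk₀
    have E1 : ∀ᶠ k in Filter.atTop, ∀ j ∈ Finset.range (n+1),
        ‖f j (y k)‖ < 1/(n+1) ∧ ‖(ContinuousLinearMap.adjoint (f j)) (y k)‖ < 1/(n+1) := by
      rw [Filter.eventually_all_finset]
      intro j hj
      obtain ⟨t1, t2⟩ := hyX (f j) (hm j (Nat.lt_succ_iff.mp (Finset.mem_range.mp hj)))
      filter_upwards [t1 (Metric.ball_mem_nhds 0 hε), t2 (Metric.ball_mem_nhds 0 hε)]
        with k hk1 hk2
      exact ⟨mem_ball_zero_iff.mp hk1, mem_ball_zero_iff.mp hk2⟩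
    have E2 : ∀ᶠ k in Filter.atTop, ∀ j ∈ Finset.range (n+1),
        ‖M (k+1) (d j) - N₀ (d j)‖ < 1/(n+1) := by
      rw [Filter.eventually_all_finset]
      intro j _
      have t1 : Filter.Tendsto (fun k => M (k+1) (d j)) Filter.atTop (nhds (N₀ (d j))) :=
        (hMconv (d j)).comp (Filter.tendsto_add_atTop_nat 1)
      filter_upwards [t1 (Metric.ball_mem_nhds (N₀ (d j)) hε)] with k hk
      rw [← dist_eq_norm]
      exact Metric.mem_ball.mp hk
    obtain ⟨k, h1, h2, h3⟩ := (E1.and (E2.and (Filter.eventually_ge_atTop k₀))).exists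
    have hPM : projLE P (M k) := projLE_trans' hk₀ (hMmono k₀ k h3)
    have hMky : M k (y k) = 0 := by
      have e := hyeq k
      rw [ContinuousLinearMap.sub_apply] at e
      have c1 : M k (M (k+1) (y k)) = M k (y k) := by
        have hc := projLE_comm' (projOf _ (hMmem k)).1 (projOf _ (hMmem (k+1))).1 (hMlt k).1
        exact congrFun (congrArg DFunLike.coe hc) (y k)
      have c2 : M k (M k (y k)) = M k (y k) :=
        congrFun (congrArg DFunLike.coe (projOf _ (hMmem k)).2) (y k)
      have e2 := congrArg (M k) e
      rw [map_sub, c1, c2, sub_self] at e2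
      exact e2.symm
    have hMk1y : M (k+1) (y k) = y k := by
      have e := hyeq k
      rw [ContinuousLinearMap.sub_apply, hMky, sub_zero] at e
      exact e
    have hPy : P (y k) = 0 := by
      have hc := projLE_comm' (projOf P hPmem).1 (projOf _ (hMmem k)).1 hPM
      have c : P (M k (y k)) = P (y k) := congrFun (congrArg DFunLike.coe hc) (y k)
      rw [hMky, map_zero] at c
      exact c.symm
    refine ⟨M (k+1), y k, hMmem (k+1), hMltN (k+1),
      ⟨projLE_trans' hPM (hMlt k).1, ?_⟩, hynorm k, ?_, ?_, ?_⟩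
    · intro hEq
      have heq2 : M k = M (k+1) :=
        projLE_antisymm' (projOf _ (hMmem k)).1 (projOf _ (hMmem (k+1))).1
          (hMlt k).1 (hEq ▸ hPM)
      exact (hMlt k).2 heq2
    · rw [ContinuousLinearMap.sub_apply, hMk1y, hPy, sub_zero]
    · intro j hj; exact h1 j (Finset.mem_range.mpr (Nat.lt_succ_of_le hj))
    · intro j hj; exact h2 j (Finset.mem_range.mpr (Nat.lt_succ_of_le hj))
  choose! Qf xf hQmem hQlt hQgt hxnorm hxeq hxsmall hQclose using step
  -- Initial point of the recursion.
  obtain ⟨N0f, x0f, hN0mem, hN0inc, hN0lt, hN0conv, hx0n, hx0e, hx0X⟩ := hTS 0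
  -- Build the sequence recursively.
  let Nseq : ℕ → H →L[ℂ] H := fun n => Nat.rec (N0f 0) (fun n P => Qf n P) n
  have hNinv : ∀ n, Nseq n ∈ 𝒩.carrier ∧ projLT (Nseq n) N₀ := by
    intro n
    induction n with
    | zero => exact ⟨hN0mem 0, hN0lt 0⟩
    | succ n ih => exact ⟨hQmem n _ ih.1 ih.2, hQlt n _ ih.1 ih.2⟩
  let xseq : ℕ → H := fun n => xf n (Nseq n)
  have hclose : ∀ j n, j ≤ n → ‖Nseq (n+1) (d j) - N₀ (d j)‖ < 1/(n+1) :=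
    fun j n hj => hQclose n _ (hNinv n).1 (hNinv n).2 j hj
  have hconvAll : ∀ v : H, Filter.Tendsto (fun n => Nseq n v) Filter.atTop (nhds (N₀ v)) := by
    intro v
    rw [Metric.tendsto_atTop]
    intro ε hε
    obtain ⟨j, hjd⟩ := Metric.denseRange_iff.mp hdense v (ε/4) (by positivity)
    obtain ⟨K, hK⟩ := exists_nat_gt (4/ε)
    refine ⟨max (j+1) (K+1), fun n hn => ?_⟩
    have hn1 : j + 1 ≤ n := le_trans (le_max_left _ _) hn
    have hn2 : K + 1 ≤ n := le_trans (le_max_right _ _) hn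
    obtain ⟨n', rfl⟩ : ∃ n', n = n' + 1 := ⟨n - 1, by omega⟩
    have hj' : j ≤ n' := by omega
    have c1 : ‖Nseq (n'+1) (d j) - N₀ (d j)‖ < 1/(n'+1) := hclose j n' hj'
    have hKn : (K:ℝ) < (n':ℝ) + 1 := by exact_mod_cast (by omega : K < n' + 1)
    have h4e : (4:ℝ)/ε < (n':ℝ)+1 := lt_trans hK hKn
    have h4 : (4:ℝ) < ((n':ℝ)+1)*ε := (div_lt_iff₀ hε).mp h4e
    have hb1 : (1:ℝ)/((n':ℝ)+1) < ε/4 := by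
      rw [div_lt_div_iff₀ (by positivity) (by norm_num)]
      nlinarith
    have hNn := hNinv (n'+1)
    have hprojN := projOf _ hNn.1
    have hprojN0 := projOf N₀ hN₀
    have hc1 : ‖Nseq (n'+1) (v - d j)‖ ≤ ‖v - d j‖ := proj_norm_le' hprojN.1 hprojN.2 _
    have hc2 : ‖N₀ (d j - v)‖ ≤ ‖d j - v‖ := proj_norm_le' hprojN0.1 hprojN0.2 _
    have hd1 : ‖v - d j‖ < ε/4 := by rw [← dist_eq_norm]; exact hjd
    have hd2 : ‖d j - v‖ < ε/4 := by rw [← dist_eq_norm, dist_comm]; exact hjd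
    rw [dist_eq_norm]
    have split : Nseq (n'+1) v - N₀ v =
        Nseq (n'+1) (v - d j) + (Nseq (n'+1) (d j) - N₀ (d j)) + N₀ (d j - v) := by
      simp only [map_sub]; abel
    rw [split]
    calc ‖Nseq (n'+1) (v - d j) + (Nseq (n'+1) (d j) - N₀ (d j)) + N₀ (d j - v)‖
        ≤ ‖Nseq (n'+1) (v - d j)‖ + ‖Nseq (n'+1) (d j) - N₀ (d j)‖ + ‖N₀ (d j - v)‖ :=
          norm_add₃_le
      _ < ε/4 + ε/4 + ε/4 := by
          have e1 := lt_of_le_of_lt hc1 hd1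
          have e2 := lt_of_lt_of_le c1 hb1.le
          have e3 := lt_of_le_of_lt hc2 hd2
          linarith
      _ < ε := by linarith
  refine ⟨Nseq, xseq, fun n => (hNinv n).1, fun n => hQgt n _ (hNinv n).1 (hNinv n).2,
    fun n => (hNinv n).2, hconvAll, fun n => hxnorm n _ (hNinv n).1 (hNinv n).2,
    fun n => hxeq n _ (hNinv n).1 (hNinv n).2, ?_⟩
  intro X hX
  rw [hf] at hX
  obtain ⟨j, rfl⟩ := hX
  have hbound : ∀ n, j ≤ n → ‖f j (xseq n)‖ < 1/(n+1) ∧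
      ‖(ContinuousLinearMap.adjoint (f j)) (xseq n)‖ < 1/(n+1) :=
    fun n hn => hxsmall n _ (hNinv n).1 (hNinv n).2 j hn
  have hlim : Filter.Tendsto (fun n : ℕ => 1/((n:ℝ)+1)) Filter.atTop (nhds 0) :=
    tendsto_one_div_add_atTop_nhds_zero_nat
  constructor
  · rw [tendsto_zero_iff_norm_tendsto_zero]
    refine squeeze_zero' (Filter.Eventually.of_forall fun n => norm_nonneg _) ?_ hlim
    exact Filter.eventually_atTop.mpr ⟨j, fun n hn => ((hbound n hn).1).le⟩
  · rw [tendsto_zero_iff_norm_tendsto_zero]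
    refine squeeze_zero' (Filter.Eventually.of_forall fun n => norm_nonneg _) ?_ hlim
    exact Filter.eventually_atTop.mpr ⟨j, fun n hn => ((hbound n hn).2).le⟩
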